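/- Let X = Option (ZMod 125), writing ∞ for none, with ZMod 125 acting on X by translation (t • some x = some (x + t), t • ∞ = ∞). Let ℬ be the family of all translates of the five base blocks B1 = {0,1,3,15,47,74}, B2 = {0,4,26,64,109,120}, B3 = {0,6,40,88,95,112}, B4 = {0,8,29,57,92,115} (as subsets of X via some), and B5 = {0,25,50,75,100} ∪ {∞}. Then every block of ℬ has exactly 6 elements and every pair of distinct points of X is contained in exactly one block of ℬ; that is, ℬ is a Steiner system S(2,6,126) (a unital of order 5) on X, invariant under the translation action with the single fixed point ∞. -/

import Mathlib

set_option maxRecDepth 20000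

/-- Translation action of `ZMod 125` on `Option (ZMod 125)`:
`t • some x = some (x + t)`, `t • ∞ = ∞`. -/
def tr125 (t : ZMod 125) : Option (ZMod 125) → Option (ZMod 125) :=
  Option.map (fun a => a + t)

/-- The five base blocks of the difference family. -/
def baseBlocks1 : List (Finset (Option (ZMod 125))) :=
  [ {some 0, some 1, some 3, some 15, some 47, some 74},
    {some 0, some 4, some 26, some 64, some 109, some 120},
    {some 0, some 6, some 40, some 88, some 95, some 112},
    {some 0, some 8, some 29, some 57, some 92, some 115},
    {some 0, some 25, some 50, some 75, some 100, none} ]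

/-- The family of all translates of the base blocks. -/
def blocks1 : Set (Finset (Option (ZMod 125))) :=
  { B | ∃ t : ZMod 125, ∃ B0 ∈ baseBlocks1, B = B0.image (tr125 t) }

def Ls : Fin 5 → List (ZMod 125) := fun i =>
  [[0,1,3,15,47,74],[0,4,26,64,109,120],[0,6,40,88,95,112],
   [0,8,29,57,92,115],[0,25,50,75,100]].get ⟨i.1, i.2⟩

def bb (i : Fin 5) : Finset (Option (ZMod 125)) := baseBlocks1.get ⟨i.1, i.2⟩

def cand (d : ZMod 125) : List (Fin 5 × ZMod 125) :=
  (List.finRange 5).flatMap fun i =>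
    (((Ls i).map (fun a => -a)).filter
      fun s => decide ((d - s) ∈ Ls i ∧ (i = 4 → s = 0))).map fun s => (i, s)

lemma cand_len : ∀ d : ZMod 125, d ≠ 0 → (cand d).length = 1 := by decide

lemma mem_cand {d : ZMod 125} {i : Fin 5} {s : ZMod 125} :
    (i, s) ∈ cand d ↔ (-s ∈ Ls i ∧ (d - s) ∈ Ls i ∧ (i = 4 → s = 0)) := by
  simp only [cand, List.mem_flatMap, List.mem_finRange, List.mem_map, List.mem_filter,
    decide_eq_true_eq, true_and]
  constructor
  · rintro ⟨j, s', ⟨⟨a, ha, rfl⟩, h1, h2⟩, he⟩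
    obtain ⟨rfl, rfl⟩ := Prod.mk.injEq .. ▸ he
    exact ⟨by simpa using ha, h1, h2⟩
  · rintro ⟨h0, h1, h2⟩
    exact ⟨i, s, ⟨⟨-s, h0, by simp⟩, h1, h2⟩, rfl⟩

lemma mem_bb : ∀ (i : Fin 5) (z : ZMod 125), (some z ∈ bb i ↔ z ∈ Ls i) := by decide

lemma none_mem_bb : ∀ i : Fin 5, (none ∈ bb i ↔ i = 4) := by decide

lemma neg_mem_Ls4 : ∀ c ∈ Ls 4, -c ∈ Ls 4 := by decide

lemma zero_mem_Ls4 : (0 : ZMod 125) ∈ Ls 4 := by decide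

lemma bb_card : ∀ i : Fin 5, (bb i).card = 6 := by decide

lemma bb4_shift : ∀ c ∈ Ls 4, (bb 4).image (tr125 c) = bb 4 := by decide

lemma tr_inj (t : ZMod 125) : Function.Injective (tr125 t) :=
  Option.map_injective (fun a b h => by simpa using h)

lemma image_image (B : Finset (Option (ZMod 125))) (s t : ZMod 125) :
    (B.image (tr125 s)).image (tr125 t) = B.image (tr125 (s + t)) := by
  rw [Finset.image_image]
  congr 1
  funext x
  cases x with
  | none => rfl
  | some a => simp [tr125, Function.comp, add_assoc]

lemma mem_blocks1 {B : Finset (Option (ZMod 125))} :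
    B ∈ blocks1 ↔ ∃ t : ZMod 125, ∃ i : Fin 5, B = (bb i).image (tr125 t) := by
  constructor
  · rintro ⟨t, B0, hB0, rfl⟩
    obtain ⟨n, rfl⟩ := List.mem_iff_get.mp hB0
    exact ⟨t, ⟨n.1, n.2⟩, rfl⟩
  · rintro ⟨t, i, rfl⟩
    exact ⟨t, bb i, List.get_mem _ _, rfl⟩

lemma some_mem_image {B0 : Finset (Option (ZMod 125))} {t y : ZMod 125} :
    some y ∈ B0.image (tr125 t) ↔ some (y - t) ∈ B0 := by
  simp only [Finset.mem_image]
  constructor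
  · rintro ⟨b, hb, he⟩
    cases b with
    | none => simp [tr125] at he
    | some a =>
      simp only [tr125, Option.map_some, Option.some.injEq] at he
      have : a = y - t := by rw [← he]; ring
      rwa [← this]
  · intro h
    exact ⟨some (y - t), h, by simp [tr125]⟩

lemma none_mem_image {B0 : Finset (Option (ZMod 125))} {t : ZMod 125} :
    none ∈ B0.image (tr125 t) ↔ none ∈ B0 := by
  simp only [Finset.mem_image]
  constructor
  · rintro ⟨b, hb, he⟩
    cases b with
    | none => exact hb
    | some a => simp [tr125] at he
  · intro h; exact ⟨none, h, rfl⟩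

/-- Every block through `some x` has a normalized representation. -/
lemma block_norm {B : Finset (Option (ZMod 125))} (hB : B ∈ blocks1) {x : ZMod 125}
    (hx : some x ∈ B) :
    ∃ i s, B = (bb i).image (tr125 (s + x)) ∧ -s ∈ Ls i ∧ (i = 4 → s = 0) := by
  obtain ⟨t, i, rfl⟩ := mem_blocks1.mp hB
  have hxt : x - t ∈ Ls i := (mem_bb i _).mp (some_mem_image.mp hx)
  by_cases hi : i = 4
  · subst hi
    refine ⟨4, 0, ?_, by simpa using zero_mem_Ls4, fun _ => rfl⟩
    have h1 : t = (t - x) + x := by ring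
    have h2 : t - x ∈ Ls 4 := by
      have := neg_mem_Ls4 _ hxt
      simpa [neg_sub] using this
    rw [zero_add, h1, ← image_image, bb4_shift _ h2]
  · exact ⟨i, t - x, by rw [sub_add_cancel], by simpa [neg_sub] using hxt,
      fun h => absurd h hi⟩

lemma unique_none (x : ZMod 125) :
    ∃! B, B ∈ blocks1 ∧ (some x) ∈ B ∧ (none : Option (ZMod 125)) ∈ B := by
  refine ⟨(bb 4).image (tr125 x), ⟨mem_blocks1.mpr ⟨x, 4, rfl⟩, ?_, ?_⟩, ?_⟩
  · exact some_mem_image.mpr ((mem_bb 4 _).mpr (by simpa using zero_mem_Ls4))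
  · exact none_mem_image.mpr ((none_mem_bb 4).mpr rfl)
  · rintro B ⟨hB, hxB, hnB⟩
    obtain ⟨i, s, rfl, hs, hi4⟩ := block_norm hB hxB
    have h4 : i = 4 := (none_mem_bb i).mp (none_mem_image.mp hnB)
    rw [h4, hi4 h4, zero_add]

lemma unique_pair (x y : ZMod 125) (hxy : x ≠ y) :
    ∃! B, B ∈ blocks1 ∧ (some x) ∈ B ∧ (some y) ∈ B := by
  have hd : y - x ≠ 0 := sub_ne_zero.mpr (Ne.symm hxy)
  obtain ⟨pr, hpr⟩ := List.length_eq_one_iff.mp (cand_len (y - x) hd)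
  obtain ⟨i, s⟩ := pr
  have hmem : (i, s) ∈ cand (y - x) := hpr ▸ List.mem_singleton.mpr rfl
  obtain ⟨h0, h1, _⟩ := mem_cand.mp hmem
  refine ⟨(bb i).image (tr125 (s + x)), ⟨mem_blocks1.mpr ⟨s + x, i, rfl⟩, ?_, ?_⟩, ?_⟩
  · refine some_mem_image.mpr ((mem_bb i _).mpr ?_)
    have : x - (s + x) = -s := by ring
    rwa [this]
  · refine some_mem_image.mpr ((mem_bb i _).mpr ?_)
    have : y - (s + x) = (y - x) - s := by ring
    rwa [this]
  · rintro B ⟨hB, hxB, hyB⟩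
    obtain ⟨i', s', rfl, hs', hi'⟩ := block_norm hB hxB
    have hy' : (y - x) - s' ∈ Ls i' := by
      have := (mem_bb i' _).mp (some_mem_image.mp hyB)
      have he : y - (s' + x) = (y - x) - s' := by ring
      rwa [he] at this
    have : (i', s') ∈ cand (y - x) := mem_cand.mpr ⟨hs', hy', hi'⟩
    rw [hpr, List.mem_singleton] at this
    obtain ⟨rfl, rfl⟩ := Prod.mk.injEq .. ▸ this
    rfl

theorem unital_Z125_design8 :
    (∀ B ∈ blocks1, B.card = 6) ∧
    (∀ p q : Option (ZMod 125), p ≠ q →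
      ∃! B, B ∈ blocks1 ∧ p ∈ B ∧ q ∈ B) ∧
    (∀ t : ZMod 125, ∀ B ∈ blocks1, B.image (tr125 t) ∈ blocks1) ∧
    (∀ t : ZMod 125, tr125 t none = none) ∧
    (∀ t : ZMod 125, t ≠ 0 → ∀ x : Option (ZMod 125), tr125 t x = x → x = none) := by
  refine ⟨?_, ?_, ?_, fun t => rfl, ?_⟩
  · intro B hB
    obtain ⟨t, i, rfl⟩ := mem_blocks1.mp hB
    rw [Finset.card_image_of_injective _ (tr_inj t), bb_card]
  · intro p q hpq
    match p, q with
    | none, none => exact absurd rfl hpq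
    | none, some y =>
      obtain ⟨B, ⟨h1, h2, h3⟩, hu⟩ := unique_none y
      exact ⟨B, ⟨h1, h3, h2⟩, fun B' ⟨a, b, c⟩ => hu B' ⟨a, c, b⟩⟩
    | some x, none => exact unique_none x
    | some x, some y => exact unique_pair x y (fun h => hpq (by rw [h]))
  · intro t B hB
    obtain ⟨s, i, rfl⟩ := mem_blocks1.mp hB
    exact mem_blocks1.mpr ⟨s + t, i, image_image _ _ _⟩
  · intro t ht x hx
    cases x with
    | none => rfl
    | some a =>
      exfalso
      apply ht
      have : a + t = a := by simpa [tr125] using hx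
      linear_combination this
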